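/- Let G(z) = D1 + z C (I_n - zA)^{-1} B1 and K(z) = D2 + z C (I_n - zA)^{-1} B2 with A stable, and let P1, P2 be the controllability Gramians of {A,B1} and {A,B2}. Define R(z) = G(z) G(1/z̄)* - K(z) K(1/z̄)*. Then for all z on the unit circle (indeed for all z ≠ 0 where both sides are defined), R(z) = z C (I_n - zA)^{-1} Γ + R_0 + Γ* (z I_n - A*)^{-1} C*, where R_0 = D1 D1* - D2 D2* + C (P1 - P2) C* and Γ = B1 D1* - B2 D2* + A (P1 - P2) C*. -/

import Mathlib

set_option maxHeartbeats 1000000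

open Matrix Filter
open scoped ENNReal NNReal

section aux
attribute [local instance] Matrix.frobeniusNormedRing Matrix.frobeniusNormedAlgebra
  Matrix.frobeniusNormedAddCommGroup

private lemma stein_zero {n : ℕ} (A Q : Matrix (Fin n) (Fin n) ℂ)
    (hA : ∀ μ ∈ spectrum ℂ A, ‖μ‖ < 1) (hQ : Q = A * Q * Aᴴ) : Q = 0 := by
  rcases Nat.eq_zero_or_pos n with hn | hn
  · subst hn; ext i j; exact i.elim0
  haveI : Nonempty (Fin n) := ⟨⟨0, hn⟩⟩
  haveI : CompleteSpace (Matrix (Fin n) (Fin n) ℂ) := FiniteDimensional.complete ℂ _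
  have hρ : spectralRadius ℂ A < 1 := by
    have h1 := spectrum.spectralRadius_lt_of_forall_lt (a := A) (r := 1) ?_
    · simpa using h1
    · intro μ hμ
      have := hA μ hμ
      simpa [← NNReal.coe_lt_coe, nnnorm] using this
  have hG := spectrum.pow_nnnorm_pow_one_div_tendsto_nhds_spectralRadius A
  have hev := hG.eventually_lt_const hρ
  obtain ⟨k, hk1, hk⟩ : ∃ k : ℕ, 1 ≤ k ∧ (‖A ^ k‖₊ : ℝ≥0∞) ^ (1 / (k : ℝ)) < 1 := by
    obtain ⟨k, hk⟩ := (hev.and (eventually_ge_atTop 1)).exists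
    exact ⟨k, hk.2, hk.1⟩
  have hAk : ‖A ^ k‖₊ < 1 := by
    by_contra h
    push_neg at h
    have h2 : (1 : ℝ≥0∞) ≤ (‖A ^ k‖₊ : ℝ≥0∞) ^ (1 / (k : ℝ)) := by
      apply ENNReal.one_le_rpow ?_ (by positivity)
      exact_mod_cast h
    exact absurd hk (not_lt.mpr h2)
  have hiter : ∀ j : ℕ, Q = A ^ j * Q * (Aᴴ) ^ j := by
    intro j
    induction j with
    | zero => simp
    | succ j ih =>
      calc Q = A * Q * Aᴴ := hQ
      _ = A * (A ^ j * Q * Aᴴ ^ j) * Aᴴ := by rw [← ih]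
      _ = A ^ (j+1) * Q * Aᴴ ^ (j+1) := by
        rw [pow_succ' A j, pow_succ Aᴴ j]
        noncomm_ring
  have hb : ‖Q‖₊ ≤ ‖A ^ k‖₊ * ‖Q‖₊ * ‖A ^ k‖₊ := by
    calc ‖Q‖₊ = ‖A ^ k * Q * Aᴴ ^ k‖₊ := by rw [← hiter k]
    _ ≤ ‖A ^ k * Q‖₊ * ‖Aᴴ ^ k‖₊ := Matrix.frobenius_nnnorm_mul _ _
    _ ≤ ‖A ^ k‖₊ * ‖Q‖₊ * ‖Aᴴ ^ k‖₊ := by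
        gcongr; exact Matrix.frobenius_nnnorm_mul _ _
    _ = ‖A ^ k‖₊ * ‖Q‖₊ * ‖A ^ k‖₊ := by
        rw [← Matrix.conjTranspose_pow, Matrix.frobenius_nnnorm_conjTranspose]
  have hQ0 : ‖Q‖₊ = 0 := by
    by_contra h
    have h0 : 0 < ‖Q‖₊ := pos_iff_ne_zero.mpr h
    have h2 : ‖A ^ k‖₊ * ‖Q‖₊ * ‖A ^ k‖₊ < 1 * ‖Q‖₊ * 1 := by gcongr <;> exact hAk
    rw [one_mul, mul_one] at h2
    exact absurd (lt_of_le_of_lt hb h2) (lt_irrefl _)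
  simpa using hQ0

end aux

private lemma gramian_herm {n p : ℕ} (A P : Matrix (Fin n) (Fin n) ℂ)
    (B : Matrix (Fin n) (Fin p) ℂ)
    (hA : ∀ μ ∈ spectrum ℂ A, ‖μ‖ < 1) (hP : P = A * P * Aᴴ + B * Bᴴ) : Pᴴ = P := by
  have h := stein_zero A (Pᴴ - P) hA ?_
  · linear_combination (norm := abel) h
  · have h1 : Pᴴ = A * Pᴴ * Aᴴ + B * Bᴴ := by
      conv_lhs => rw [hP]
      simp [Matrix.conjTranspose_add, Matrix.conjTranspose_mul, Matrix.mul_assoc]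
    calc Pᴴ - P = (A * Pᴴ * Aᴴ + B * Bᴴ) - (A * P * Aᴴ + B * Bᴴ) := by rw [← h1, ← hP]
    _ = A * (Pᴴ - P) * Aᴴ := by noncomm_ring

private lemma decomp {n : ℕ} (A P : Matrix (Fin n) (Fin n) ℂ) (z : ℂ)
    (hsz : star z = z⁻¹) (hzz : z * z⁻¹ = 1) :
    P - A * P * Aᴴ =
      (1 - z • A) * P * (1 - z • A)ᴴ + z⁻¹ • ((1 - z • A) * (P * Aᴴ))
        + z • ((A * P) * (1 - z • A)ᴴ) := by
  have hH : (1 - z • A)ᴴ = 1 - z⁻¹ • Aᴴ := by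
    simp [Matrix.conjTranspose_smul, hsz]
  rw [hH]
  simp only [Matrix.mul_sub, Matrix.sub_mul, Matrix.mul_one, Matrix.one_mul, smul_sub,
    mul_smul_comm, smul_mul_assoc, smul_smul, hzz,
    inv_mul_cancel₀ (fun h => by simp [h] at hzz : z ≠ 0), one_smul, Matrix.mul_assoc]
  abel

private lemma sandwich {n : ℕ} (A P : Matrix (Fin n) (Fin n) ℂ) (z : ℂ)
    (hsz : star z = z⁻¹) (hzz : z * z⁻¹ = 1)
    (hWu : (1 - z • A)⁻¹ * (1 - z • A) = 1)
    (huHWH : (1 - z • A)ᴴ * ((1 - z • A)⁻¹)ᴴ = 1) :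
    (1 - z • A)⁻¹ * ((P - A * P * Aᴴ) * ((1 - z • A)⁻¹)ᴴ) =
      P + z⁻¹ • (P * (Aᴴ * ((1 - z • A)⁻¹)ᴴ)) + z • ((1 - z • A)⁻¹ * (A * P)) := by
  rw [decomp A P z hsz hzz]
  have e1 : ∀ (X : Matrix (Fin n) (Fin n) ℂ), (1 - z • A)⁻¹ * ((1 - z • A) * X) = X := by
    intro X; rw [← Matrix.mul_assoc, hWu, Matrix.one_mul]
  simp only [Matrix.add_mul, Matrix.mul_add, smul_mul_assoc, mul_smul_comm, Matrix.mul_assoc,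
    huHWH, Matrix.mul_one, e1]

private lemma expandGG {n m p : ℕ} (A P : Matrix (Fin n) (Fin n) ℂ)
    (B : Matrix (Fin n) (Fin p) ℂ) (C : Matrix (Fin m) (Fin n) ℂ)
    (D : Matrix (Fin m) (Fin p) ℂ) (z : ℂ)
    (hsz : star z = z⁻¹) (hzz : z * z⁻¹ = 1) (hzz' : z⁻¹ * z = 1)
    (hP : P = A * P * Aᴴ + B * Bᴴ)
    (hWu : (1 - z • A)⁻¹ * (1 - z • A) = 1)
    (huHWH : (1 - z • A)ᴴ * ((1 - z • A)⁻¹)ᴴ = 1) :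
    (D + z • (C * (1 - z • A)⁻¹ * B)) * (D + z • (C * (1 - z • A)⁻¹ * B))ᴴ =
      D * Dᴴ + C * (P * Cᴴ)
        + z • (C * ((1 - z • A)⁻¹ * (B * Dᴴ + A * (P * Cᴴ))))
        + z⁻¹ • ((D * Bᴴ + C * (P * Aᴴ)) * (((1 - z • A)⁻¹)ᴴ * Cᴴ)) := by
  have hBB : B * Bᴴ = P - A * P * Aᴴ := by
    nth_rewrite 1 [hP]; abel
  have hs : (1 - z • A)⁻¹ * ((B * Bᴴ) * ((1 - z • A)⁻¹)ᴴ) =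
      P + z⁻¹ • (P * (Aᴴ * ((1 - z • A)⁻¹)ᴴ)) + z • ((1 - z • A)⁻¹ * (A * P)) := by
    rw [hBB]; exact sandwich A P z hsz hzz hWu huHWH
  set W := (1 - z • A)⁻¹ with hW
  calc (D + z • (C * W * B)) * (D + z • (C * W * B))ᴴ
      = D * Dᴴ + z • (C * (W * (B * Dᴴ))) + z⁻¹ • (D * (Bᴴ * (Wᴴ * Cᴴ)))
        + C * (W * ((B * Bᴴ) * (Wᴴ * Cᴴ))) := by
        simp only [Matrix.conjTranspose_add, Matrix.conjTranspose_smul, Matrix.conjTranspose_mul,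
          hsz, Matrix.add_mul, Matrix.mul_add, Matrix.smul_mul, Matrix.mul_smul, smul_smul,
          smul_add, hzz, hzz', one_smul, Matrix.mul_assoc]
        abel
    _ = _ := by
        have : C * (W * ((B * Bᴴ) * (Wᴴ * Cᴴ))) =
            C * (P * Cᴴ) + z⁻¹ • (C * (P * (Aᴴ * (Wᴴ * Cᴴ)))) + z • (C * (W * (A * (P * Cᴴ)))) := by
          have h2 := congrArg (fun X => C * (X * Cᴴ)) hs
          calc C * (W * (B * Bᴴ * (Wᴴ * Cᴴ))) = C * (W * (B * Bᴴ * Wᴴ) * Cᴴ) := by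
                simp only [Matrix.mul_assoc]
          _ = _ := by
                rw [h2]
                simp only [Matrix.add_mul, Matrix.mul_add, Matrix.smul_mul, Matrix.mul_smul,
                  Matrix.mul_assoc]
        rw [this]
        simp only [Matrix.mul_add, Matrix.add_mul, smul_add, smul_smul, Matrix.mul_smul,
          Matrix.smul_mul, Matrix.mul_assoc]
        abel

/-- Realization of `R(z) = G(z) G(1/z̄)* - K(z) K(1/z̄)*` on the unit circle, where
`G(z) = D1 + zC(I - zA)⁻¹B1` and `K(z) = D2 + zC(I - zA)⁻¹B2` with `A` stable and
`P1, P2` the controllability Gramians of `{A,B1}` and `{A,B2}`. -/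
theorem stmt4 {n m p q : ℕ} (A : Matrix (Fin n) (Fin n) ℂ)
    (B1 : Matrix (Fin n) (Fin p) ℂ) (B2 : Matrix (Fin n) (Fin q) ℂ)
    (C : Matrix (Fin m) (Fin n) ℂ)
    (D1 : Matrix (Fin m) (Fin p) ℂ) (D2 : Matrix (Fin m) (Fin q) ℂ)
    (hA : ∀ μ ∈ spectrum ℂ A, ‖μ‖ < 1)
    (P1 P2 : Matrix (Fin n) (Fin n) ℂ)
    (hP1 : P1 = A * P1 * Aᴴ + B1 * B1ᴴ) (hP2 : P2 = A * P2 * Aᴴ + B2 * B2ᴴ)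
    (G : ℂ → Matrix (Fin m) (Fin p) ℂ) (K : ℂ → Matrix (Fin m) (Fin q) ℂ)
    (hG : ∀ z : ℂ, G z = D1 + z • (C * (1 - z • A)⁻¹ * B1))
    (hK : ∀ z : ℂ, K z = D2 + z • (C * (1 - z • A)⁻¹ * B2))
    (R0 : Matrix (Fin m) (Fin m) ℂ) (Γ : Matrix (Fin n) (Fin m) ℂ)
    (hR0 : R0 = D1 * D1ᴴ - D2 * D2ᴴ + C * (P1 - P2) * Cᴴ)
    (hΓ : Γ = B1 * D1ᴴ - B2 * D2ᴴ + A * (P1 - P2) * Cᴴ) :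
    ∀ z : ℂ, ‖z‖ = 1 →
      G z * (G ((starRingEnd ℂ z)⁻¹))ᴴ - K z * (K ((starRingEnd ℂ z)⁻¹))ᴴ =
        z • (C * (1 - z • A)⁻¹ * Γ) + R0 + Γᴴ * (z • (1 : Matrix (Fin n) (Fin n) ℂ) - Aᴴ)⁻¹ * Cᴴ := by
  intro z hz
  have hz0 : z ≠ 0 := by intro h; rw [h] at hz; simp at hz
  have hzz : z * z⁻¹ = 1 := mul_inv_cancel₀ hz0
  have hzz' : z⁻¹ * z = 1 := inv_mul_cancel₀ hz0
  have hcz : (starRingEnd ℂ) z = z⁻¹ := by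
    have h1 : z * (starRingEnd ℂ) z = 1 := by
      rw [Complex.mul_conj]
      norm_cast
      rw [Complex.normSq_eq_norm_sq]
      simp [hz]
    field_simp at h1 ⊢
    linear_combination h1
  have hsz : star z = z⁻¹ := hcz
  have hzci : ((starRingEnd ℂ) z)⁻¹ = z := by rw [hcz, inv_inv]
  -- invertibility of 1 - z • A
  have hu : IsUnit (1 - z • A) := by
    have h1 : z⁻¹ ∉ spectrum ℂ A := by
      intro hmem
      have := hA _ hmem
      rw [norm_inv, hz] at this
      norm_num at this
    rw [spectrum.notMem_iff] at h1
    have h2 : (1 : Matrix (Fin n) (Fin n) ℂ) - z • A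
        = (z • 1) * (algebraMap ℂ (Matrix (Fin n) (Fin n) ℂ) z⁻¹ - A) := by
      rw [Algebra.algebraMap_eq_smul_one]
      rw [smul_mul_assoc, one_mul, smul_sub, smul_smul, hzz, one_smul]
    rw [h2]
    have h3 : IsUnit ((z : ℂ) • (1 : Matrix (Fin n) (Fin n) ℂ)) := by
      rw [← Algebra.algebraMap_eq_smul_one]
      exact (isUnit_iff_ne_zero.mpr hz0).map (algebraMap ℂ (Matrix (Fin n) (Fin n) ℂ))
    exact h3.mul h1
  have hud : IsUnit (1 - z • A).det := (Matrix.isUnit_iff_isUnit_det _).mp hu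
  have hWu : (1 - z • A)⁻¹ * (1 - z • A) = 1 := Matrix.nonsing_inv_mul _ hud
  have huW : (1 - z • A) * (1 - z • A)⁻¹ = 1 := Matrix.mul_nonsing_inv _ hud
  have huHWH : (1 - z • A)ᴴ * ((1 - z • A)⁻¹)ᴴ = 1 := by
    rw [← Matrix.conjTranspose_mul, hWu, Matrix.conjTranspose_one]
  -- hermiticity of the Gramians
  have hH1 : P1ᴴ = P1 := gramian_herm A P1 B1 hA hP1
  have hH2 : P2ᴴ = P2 := gramian_herm A P2 B2 hA hP2
  -- resolvent identity on the right
  have hres : (z • (1 : Matrix (Fin n) (Fin n) ℂ) - Aᴴ)⁻¹ = z⁻¹ • ((1 - z • A)⁻¹)ᴴ := by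
    apply Matrix.inv_eq_right_inv
    have hzu : z • (1 : Matrix (Fin n) (Fin n) ℂ) - Aᴴ = z • (1 - z • A)ᴴ := by
      have hH : (1 - z • A)ᴴ = 1 - z⁻¹ • Aᴴ := by
        simp [Matrix.conjTranspose_smul, hsz]
      rw [hH, smul_sub, smul_smul, hzz, one_smul]
    rw [hzu, Matrix.smul_mul, Matrix.mul_smul, smul_smul, hzz, one_smul, huHWH]
  -- expand both transfer-function products
  have hGG := expandGG A P1 B1 C D1 z hsz hzz hzz' hP1 hWu huHWH
  have hKK := expandGG A P2 B2 C D2 z hsz hzz hzz' hP2 hWu huHWH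
  rw [hzci, hG z, hK z, hGG, hKK, hres, hR0, hΓ]
  have hΓH : (B1 * D1ᴴ - B2 * D2ᴴ + A * (P1 - P2) * Cᴴ)ᴴ
      = D1 * B1ᴴ - D2 * B2ᴴ + C * ((P1 - P2) * Aᴴ) := by
    simp [Matrix.conjTranspose_add, Matrix.conjTranspose_sub, Matrix.conjTranspose_mul,
      Matrix.conjTranspose_sub, hH1, hH2, Matrix.mul_assoc]
  rw [hΓH]
  simp only [Matrix.mul_add, Matrix.add_mul, Matrix.mul_sub, Matrix.sub_mul, smul_add, smul_sub,
    Matrix.smul_mul, Matrix.mul_smul, smul_smul, Matrix.mul_assoc]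
  abel
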